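/- Let {i,j,k} = {1,2,3} and let f : m → m be a linear map with f = 0 on mᵢ, f(mⱼ ⊕ m_k) ⊆ mⱼ ⊕ m_k, and f ∘ f = −id on mⱼ ⊕ m_k (an invariant f-structure whose kernel is the single module mᵢ). Then for every choice of positive reals a₁, a₂, a₃ and every X ∈ m one has f(2U(fX, f²X) − f(U(fX, fX)) + f(U(f²X, f²X))) = 0; that is, (f, g_a) always satisfies the G₁f condition. -/

import Mathlib

open LieAlgebra

/-- The setting of the paper: a finite-dimensional real Lie algebra `g` with negative
definite Killing form, decomposed as a direct sum of subspaces `g = h ⊕ m₁ ⊕ m₂ ⊕ m₃`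
(here indexed by `Fin 3`, so `m 0 = m₁` etc.), where `h` is a Lie subalgebra, the `mᵢ`
are pairwise `B`-orthogonal, `0 ≠ [mᵢ, mᵢ₊₁] ⊆ mᵢ₊₂` (mod 3) and `[mᵢ, mᵢ] ⊆ h`.
The projections onto `h` (resp. `mᵢ`) along the decomposition are `ph` (resp. `p i`). -/
structure ThreeModuleSetting (g : Type*) [LieRing g] [LieAlgebra ℝ g]
    [FiniteDimensional ℝ g] where
  hsub : Submodule ℝ g
  m : Fin 3 → Submodule ℝ g
  ph : g →ₗ[ℝ] g
  p : Fin 3 → (g →ₗ[ℝ] g)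
  killing_neg : ∀ X : g, X ≠ 0 → killingForm ℝ g X X < 0
  hsub_lie : ∀ X ∈ hsub, ∀ Y ∈ hsub, ⁅X, Y⁆ ∈ hsub
  ph_mem : ∀ X : g, ph X ∈ hsub
  p_mem : ∀ (i : Fin 3) (X : g), p i X ∈ m i
  sum_eq : ∀ X : g, ph X + p 0 X + p 1 X + p 2 X = X
  proj_spec : ∀ Yh ∈ hsub, ∀ Y0 ∈ m 0, ∀ Y1 ∈ m 1, ∀ Y2 ∈ m 2,
      ph (Yh + Y0 + Y1 + Y2) = Yh ∧ p 0 (Yh + Y0 + Y1 + Y2) = Y0 ∧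
      p 1 (Yh + Y0 + Y1 + Y2) = Y1 ∧ p 2 (Yh + Y0 + Y1 + Y2) = Y2
  orth : ∀ i j : Fin 3, i ≠ j → ∀ X ∈ m i, ∀ Y ∈ m j, killingForm ℝ g X Y = 0
  bracket_cyc : ∀ i : Fin 3, ∀ X ∈ m i, ∀ Y ∈ m (i + 1), ⁅X, Y⁆ ∈ m (i + 2)
  bracket_ne : ∀ i : Fin 3, ∃ X ∈ m i, ∃ Y ∈ m (i + 1), ⁅X, Y⁆ ≠ 0
  bracket_h : ∀ i : Fin 3, ∀ X ∈ m i, ∀ Y ∈ m i, ⁅X, Y⁆ ∈ hsub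

namespace ThreeModuleSetting

variable {g : Type*} [LieRing g] [LieAlgebra ℝ g] [FiniteDimensional ℝ g]
  (S : ThreeModuleSetting g)

/-- The reductive complement `m = m₁ ⊕ m₂ ⊕ m₃`. -/
def msum : Submodule ℝ g := S.m 0 ⊔ S.m 1 ⊔ S.m 2

/-- The projection of `X ∈ g` onto `m` along `h`. -/
def projm (X : g) : g := S.p 0 X + S.p 1 X + S.p 2 X

/-- The inner product `g_a` on `m` determined by the characteristic numbers
`a = (a₁, a₂, a₃)`, namely `g_a(X,Y) = a₁ g₀(X₁,Y₁) + a₂ g₀(X₂,Y₂) + a₃ g₀(X₃,Y₃)`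
where `g₀ = -B`. -/
noncomputable def ga (a : Fin 3 → ℝ) (X Y : g) : ℝ :=
  a 0 * (-(killingForm ℝ g (S.p 0 X) (S.p 0 Y))) +
  a 1 * (-(killingForm ℝ g (S.p 1 X) (S.p 1 Y))) +
  a 2 * (-(killingForm ℝ g (S.p 2 X) (S.p 2 Y)))

/-- The symmetric bilinear map `U : m × m → m`,
`U(X,Y) = ((a₃−a₂)/(2a₁))([X₂,Y₃]+[Y₂,X₃]) + ((a₃−a₁)/(2a₂))([X₁,Y₃]+[Y₁,X₃])
        + ((a₂−a₁)/(2a₃))([X₁,Y₂]+[Y₁,X₂])`. -/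
noncomputable def U (a : Fin 3 → ℝ) (X Y : g) : g :=
  ((a 2 - a 1) / (2 * a 0)) • (⁅S.p 1 X, S.p 2 Y⁆ + ⁅S.p 1 Y, S.p 2 X⁆) +
  ((a 2 - a 0) / (2 * a 1)) • (⁅S.p 0 X, S.p 2 Y⁆ + ⁅S.p 0 Y, S.p 2 X⁆) +
  ((a 1 - a 0) / (2 * a 2)) • (⁅S.p 0 X, S.p 1 Y⁆ + ⁅S.p 0 Y, S.p 1 X⁆)

end ThreeModuleSetting

/-- if `f` is an invariant `f`-structure with kernel the single module `mᵢ`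
(i.e. `f = 0` on `mᵢ`, `f(mⱼ ⊕ m_k) ⊆ mⱼ ⊕ m_k`, `f² = -id` on `mⱼ ⊕ m_k`), then for every
choice of positive characteristic numbers and every `X ∈ m` the `G₁f` condition
`f(2U(fX, f²X) − f(U(fX, fX)) + f(U(f²X, f²X))) = 0` holds. -/
theorem statement4 {g : Type*} [LieRing g] [LieAlgebra ℝ g] [FiniteDimensional ℝ g]
    (S : ThreeModuleSetting g) (i j k : Fin 3) (hij : i ≠ j) (hjk : j ≠ k) (hik : i ≠ k)
    (f : g →ₗ[ℝ] g)
    (hf_zero : ∀ X ∈ S.m i, f X = 0)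
    (hf_inv : ∀ X ∈ S.m j ⊔ S.m k, f X ∈ S.m j ⊔ S.m k)
    (hf_sq : ∀ X ∈ S.m j ⊔ S.m k, f (f X) = -X)
    (a : Fin 3 → ℝ) (ha : ∀ t, 0 < a t) :
    ∀ X ∈ S.msum,
      f ((2 : ℝ) • S.U a (f X) (f (f X)) - f (S.U a (f X) (f X))
          + f (S.U a (f (f X)) (f (f X)))) = 0 := by
  have hm0 : ∀ t : Fin 3, (0:g) ∈ S.m t := fun t => Submodule.zero_mem _
  have key : ∀ (t : Fin 3) (W : g), W ∈ S.m t → ∀ s : Fin 3,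
      S.p s W = if s = t then W else 0 := by
    intro t W hW s
    fin_cases t
    · obtain ⟨h1, h2, h3, h4⟩ :=
        S.proj_spec 0 (Submodule.zero_mem _) W hW 0 (hm0 1) 0 (hm0 2)
      fin_cases s <;> simp_all
    · obtain ⟨h1, h2, h3, h4⟩ :=
        S.proj_spec 0 (Submodule.zero_mem _) 0 (hm0 0) W hW 0 (hm0 2)
      fin_cases s <;> simp_all
    · obtain ⟨h1, h2, h3, h4⟩ :=
        S.proj_spec 0 (Submodule.zero_mem _) 0 (hm0 0) 0 (hm0 1) W hW
      fin_cases s <;> simp_all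
  have hbr : ∀ s t u : Fin 3, s ≠ t → u ≠ s → u ≠ t →
      ∀ X ∈ S.m s, ∀ Y ∈ S.m t, ⁅X, Y⁆ ∈ S.m u := by
    intro s t u hst hus hut X hX Y hY
    clear key hf_zero hf_inv hf_sq
    fin_cases s <;> fin_cases t <;> fin_cases u <;> simp_all <;>
      first
        | exact S.bracket_cyc _ X hX Y hY
        | (rw [← lie_skew]; exact Submodule.neg_mem _ (S.bracket_cyc _ Y hY X hX))
  have hpi : ∀ W ∈ S.m j ⊔ S.m k, S.p i W = 0 := by
    intro W hW
    obtain ⟨y, hy, z, hz, rfl⟩ := Submodule.mem_sup.mp hW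
    rw [map_add, key j y hy i, key k z hz i, if_neg hij, if_neg hik, add_zero]
  have hpm : ∀ (s : Fin 3) (W : g), S.p s W ∈ S.m s := S.p_mem
  -- brackets of projections land in m i
  have hbrp : ∀ (s t : Fin 3), s ≠ t → ∀ Y Z : g, Y ∈ S.m j ⊔ S.m k → Z ∈ S.m j ⊔ S.m k →
      ⁅S.p s Y, S.p t Z⁆ ∈ S.m i := by
    intro s t hst Y Z hY hZ
    by_cases hsi : s = i
    · rw [hsi, hpi Y hY, zero_lie]; exact Submodule.zero_mem _
    by_cases hti : t = i
    · rw [hti, hpi Z hZ, lie_zero]; exact Submodule.zero_mem _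
    exact hbr s t i hst (fun h => hsi h.symm) (fun h => hti h.symm)
      _ (hpm s Y) _ (hpm t Z)
  have hU : ∀ Y Z : g, Y ∈ S.m j ⊔ S.m k → Z ∈ S.m j ⊔ S.m k →
      S.U a Y Z ∈ S.m i := by
    intro Y Z hY hZ
    refine Submodule.add_mem _ (Submodule.add_mem _ ?_ ?_) ?_ <;>
      refine Submodule.smul_mem _ _ (Submodule.add_mem _ ?_ ?_) <;>
      apply hbrp <;> first | decide | assumption
  have exhaust : ∀ t : Fin 3, t = i ∨ t = j ∨ t = k := by omega
  intro X hX
  obtain ⟨w, hw, z2, hz2, rfl⟩ := Submodule.mem_sup.mp hX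
  obtain ⟨x0, hx0, x1, hx1, rfl⟩ := Submodule.mem_sup.mp hw
  have hpart : ∀ (t : Fin 3) (W : g), W ∈ S.m t → f W ∈ S.m j ⊔ S.m k := by
    intro t W hW
    rcases exhaust t with h | h | h
    · rw [hf_zero W (h ▸ hW)]; exact Submodule.zero_mem _
    · exact hf_inv W (Submodule.mem_sup_left (show W ∈ S.m j from h ▸ hW))
    · exact hf_inv W (Submodule.mem_sup_right (h ▸ hW))
  have hY : f (x0 + x1 + z2) ∈ S.m j ⊔ S.m k := by
    rw [map_add, map_add]
    exact Submodule.add_mem _ (Submodule.add_mem _ (hpart 0 x0 hx0) (hpart 1 x1 hx1))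
      (hpart 2 z2 hz2)
  set Y := f (x0 + x1 + z2) with hYdef
  have hZ : f Y ∈ S.m j ⊔ S.m k := hf_inv Y hY
  rw [hf_zero _ (hU Y Y hY hY), hf_zero _ (hU (f Y) (f Y) hZ hZ), sub_zero, add_zero,
    map_smul, hf_zero _ (hU Y (f Y) hY hZ), smul_zero]
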